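/- Let Ω be a convex subset of M_{n×n}(ℂ) and let Ω_s be the set of matrices in Ω that are both nonsingular and have n distinct eigenvalues. If the closure of Ω contains at least one nonsingular matrix with distinct eigenvalues, then Ω_s is dense in Ω. -/

import Mathlib

open Polynomial Matrix Filter Topology

namespace DenseAux

noncomputable section

instance matFC (n : ℕ) : FirstCountableTopology (Matrix (Fin n) (Fin n) ℂ) :=
  inferInstanceAs (FirstCountableTopology (Fin n → Fin n → ℂ))

/-- evaluation of charpoly -/
lemma eval_charpoly {n : ℕ} (M : Matrix (Fin n) (Fin n) ℂ) (x : ℂ) :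
    M.charpoly.eval x = (Matrix.scalar (Fin n) x - M).det := by
  rw [Matrix.charpoly, ← Polynomial.coe_evalRingHom, RingHom.map_det]
  congr 1
  ext i j
  by_cases hij : i = j
  · subst hij
    simp [charmatrix_apply_eq, Matrix.scalar_apply, Matrix.sub_apply,
      Matrix.diagonal_apply_eq]
  · simp [charmatrix_apply_ne _ _ _ hij, Matrix.scalar_apply, Matrix.sub_apply,
      Matrix.diagonal_apply_ne _ hij]

lemma continuous_charpoly_coeff {n : ℕ} (i : ℕ) :
    Continuous fun M : Matrix (Fin n) (Fin n) ℂ => M.charpoly.coeff i := by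
  classical
  set s : Finset ℂ := (Finset.range (n + 1)).image (Nat.cast) with hs
  have hinj : Set.InjOn (id : ℂ → ℂ) s := Set.injOn_id _
  have hcard : s.card = n + 1 := by
    rw [hs, Finset.card_image_of_injective _ Nat.cast_injective, Finset.card_range]
  have key : ∀ M : Matrix (Fin n) (Fin n) ℂ,
      M.charpoly.coeff i
        = ∑ x ∈ s, (Matrix.scalar (Fin n) x - M).det * (Lagrange.basis s id x).coeff i := by
    intro M
    have hdeg : M.charpoly.degree < (s.card : ℕ) := by
      rw [hcard, Matrix.charpoly_degree_eq_dim, Fintype.card_fin]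
      exact_mod_cast Nat.lt_succ_self n
    have hinterp := Lagrange.eq_interpolate (f := M.charpoly) (v := id) hinj hdeg
    conv_lhs => rw [hinterp]
    rw [Lagrange.interpolate_apply, finset_sum_coeff]
    refine Finset.sum_congr rfl fun x _ => ?_
    rw [coeff_C_mul, id, eval_charpoly, mul_comm]
  have : (fun M : Matrix (Fin n) (Fin n) ℂ => M.charpoly.coeff i)
      = fun M => ∑ x ∈ s, (Matrix.scalar (Fin n) x - M).det * (Lagrange.basis s id x).coeff i := by
    funext M; exact key M
  rw [this]
  exact continuous_finset_sum _ fun x _ =>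
    ((continuous_const.sub continuous_id).matrix_det).mul continuous_const

lemma root_abs_le {p : ℂ[X]} (hm : p.Monic) {z : ℂ}
    (hz : p.eval z = 0) :
    ‖z‖ ≤ 1 + ∑ i ∈ Finset.range p.natDegree, ‖p.coeff i‖ := by
  have hsum : (0:ℝ) ≤ ∑ i ∈ Finset.range p.natDegree, ‖p.coeff i‖ :=
    Finset.sum_nonneg fun i _ => norm_nonneg _
  by_cases h1 : ‖z‖ ≤ 1
  · linarith
  push_neg at h1
  set m := p.natDegree with hmdef
  have hm0 : m ≠ 0 := by
    intro hm0
    have : p = 1 := eq_one_of_monic_natDegree_zero hm hm0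
    rw [this] at hz; simp at hz
  have heval := eval_eq_sum_range' (p := p) (n := m + 1) (Nat.lt_succ_self m) z
  rw [hz, Finset.sum_range_succ, hm.coeff_natDegree, one_mul] at heval
  have hzm : z ^ m = -∑ i ∈ Finset.range m, p.coeff i * z ^ i := by
    linear_combination -heval
  have habs : ‖z‖ ^ m
      ≤ (∑ i ∈ Finset.range m, ‖p.coeff i‖) * ‖z‖ ^ (m - 1) := by
    calc ‖z‖ ^ m = ‖z ^ m‖ := by rw [norm_pow]
    _ = ‖∑ i ∈ Finset.range m, p.coeff i * z ^ i‖ := by rw [hzm, norm_neg]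
    _ ≤ ∑ i ∈ Finset.range m, ‖p.coeff i * z ^ i‖ :=
        norm_sum_le _ _
    _ ≤ ∑ i ∈ Finset.range m, ‖p.coeff i‖ * ‖z‖ ^ (m - 1) := by
        refine Finset.sum_le_sum fun i hi => ?_
        rw [norm_mul, norm_pow]
        refine mul_le_mul_of_nonneg_left ?_ (norm_nonneg _)
        have hi' := Finset.mem_range.mp hi
        exact pow_le_pow_right₀ h1.le (by omega)
    _ = _ := by rw [← Finset.sum_mul]
  have hpow : ‖z‖ ^ m = ‖z‖ * ‖z‖ ^ (m - 1) := by
    rw [← pow_succ']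
    congr 1
    omega
  have hppos : (0:ℝ) < ‖z‖ ^ (m - 1) := by positivity
  rw [hpow] at habs
  have : ‖z‖ ≤ ∑ i ∈ Finset.range m, ‖p.coeff i‖ :=
    le_of_mul_le_mul_right (by linarith [habs]) hppos
  linarith


lemma isOpen_good (n : ℕ) :
    IsOpen {M : Matrix (Fin n) (Fin n) ℂ | M.det ≠ 0 ∧ M.charpoly.roots.Nodup} := by
  classical
  have hnd : ∀ M : Matrix (Fin n) (Fin n) ℂ, M.charpoly.natDegree = n := fun M => by
    rw [Matrix.charpoly_natDegree_eq_dim, Fintype.card_fin]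
  have h1 : IsOpen {M : Matrix (Fin n) (Fin n) ℂ | M.det ≠ 0} :=
    isOpen_compl_singleton.preimage (continuous_id.matrix_det)
  have h2 : IsOpen {M : Matrix (Fin n) (Fin n) ℂ | M.charpoly.roots.Nodup} := by
    rw [← isClosed_compl_iff]
    refine IsSeqClosed.isClosed ?_
    intro Mk A hMk hlim
    simp only [Set.mem_compl_iff, Set.mem_setOf_eq] at hMk ⊢
    have hex : ∀ k, ∃ z : ℂ,
        (Mk k).charpoly.eval z = 0 ∧ ((Mk k).charpoly.derivative).eval z = 0 := by
      intro k
      have hne : (Mk k).charpoly ≠ 0 := (Matrix.charpoly_monic _).ne_zero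
      by_contra hcon
      push_neg at hcon
      apply hMk k
      rw [Multiset.nodup_iff_count_le_one]
      intro z
      rw [count_roots]
      by_contra hgt
      push_neg at hgt
      rw [one_lt_rootMultiplicity_iff_isRoot hne] at hgt
      exact hcon z hgt.1 hgt.2
    choose lam hlam1 hlam2 using hex
    have hcoeff : ∀ i, Tendsto (fun k => (Mk k).charpoly.coeff i) atTop
        (𝓝 (A.charpoly.coeff i)) := fun i =>
      ((continuous_charpoly_coeff i).tendsto A).comp hlim
    set g : ℕ → ℝ := fun k => ∑ i ∈ Finset.range n, ‖(Mk k).charpoly.coeff i‖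
      with hg_def
    have hg : Tendsto g atTop (𝓝 (∑ i ∈ Finset.range n, ‖A.charpoly.coeff i‖)) := by
      refine tendsto_finset_sum _ fun i _ => ?_
      exact (continuous_norm.tendsto _).comp (hcoeff i)
    obtain ⟨C, hC⟩ := hg.bddAbove_range
    have hCb : ∀ k, g k ≤ C := fun k => hC (Set.mem_range_self k)
    have hlamb : ∀ k, lam k ∈ Metric.closedBall (0:ℂ) (1 + C) := by
      intro k
      rw [Metric.mem_closedBall, dist_zero_right]
      have := root_abs_le (Matrix.charpoly_monic (Mk k)) (hlam1 k)
      rw [hnd (Mk k)] at this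
      exact this.trans (by linarith [hCb k])
    obtain ⟨zhat, _, φ, hφ, hzt⟩ :=
      (isCompact_closedBall (0:ℂ) (1 + C)).tendsto_subseq hlamb
    set F : Matrix (Fin n) (Fin n) ℂ × ℂ → ℂ :=
      fun q => ∑ i ∈ Finset.range (n+1), (q.1.charpoly.coeff i) * q.2 ^ i with hF_def
    set G : Matrix (Fin n) (Fin n) ℂ × ℂ → ℂ :=
      fun q => ∑ i ∈ Finset.range (n+1), (q.1.charpoly.coeff (i+1) * ((i:ℂ)+1)) * q.2 ^ i
      with hG_def
    have hFeq : ∀ (M : Matrix (Fin n) (Fin n) ℂ) (z : ℂ), F (M, z) = M.charpoly.eval z := by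
      intro M z
      rw [eval_eq_sum_range' (n := n+1) (by rw [hnd M]; omega) z]
    have hGeq : ∀ (M : Matrix (Fin n) (Fin n) ℂ) (z : ℂ),
        G (M, z) = (derivative M.charpoly).eval z := by
      intro M z
      rw [eval_eq_sum_range' (n := n+1) (by
        have := natDegree_derivative_le M.charpoly
        rw [hnd M] at this
        omega) z]
      refine Finset.sum_congr rfl fun i _ => ?_
      rw [coeff_derivative]
    have hFcont : Continuous F := by
      refine continuous_finset_sum _ fun i _ => ?_
      exact ((continuous_charpoly_coeff i).comp continuous_fst).mul
        ((continuous_pow i).comp continuous_snd)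
    have hGcont : Continuous G := by
      refine continuous_finset_sum _ fun i _ => ?_
      exact (((continuous_charpoly_coeff (i+1)).comp continuous_fst).mul continuous_const).mul
        ((continuous_pow i).comp continuous_snd)
    have hpair : Tendsto (fun j => (Mk (φ j), lam (φ j))) atTop (𝓝 (A, zhat)) :=
      (hlim.comp hφ.tendsto_atTop).prodMk_nhds hzt
    have hF0 : A.charpoly.eval zhat = 0 := by
      rw [← hFeq]
      have h1' := (hFcont.tendsto (A, zhat)).comp hpair
      have heq0 : (F ∘ fun j => (Mk (φ j), lam (φ j))) = fun _ => (0:ℂ) := by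
        funext j
        simp only [Function.comp_apply]
        rw [hFeq, hlam1]
      rw [heq0] at h1'
      exact tendsto_nhds_unique h1' tendsto_const_nhds
    have hG0 : (derivative A.charpoly).eval zhat = 0 := by
      rw [← hGeq]
      have h1' := (hGcont.tendsto (A, zhat)).comp hpair
      have heq0 : (G ∘ fun j => (Mk (φ j), lam (φ j))) = fun _ => (0:ℂ) := by
        funext j
        simp only [Function.comp_apply]
        rw [hGeq, hlam2]
      rw [heq0] at h1'
      exact tendsto_nhds_unique h1' tendsto_const_nhds
    intro hnodup
    have hmul : 1 < rootMultiplicity zhat A.charpoly :=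
      (one_lt_rootMultiplicity_iff_isRoot (Matrix.charpoly_monic A).ne_zero).2 ⟨hF0, hG0⟩
    have := Multiset.nodup_iff_count_le_one.mp hnodup zhat
    rw [count_roots] at this
    omega
  exact h1.inter h2


lemma exists_denominator {P : Polynomial (Polynomial ℂ)} (hP : P.Monic) (z₀ : ℂ)
    (hsq : Squarefree (P.map (evalRingHom z₀))) :
    ∃ d : Polynomial ℂ, d ≠ 0 ∧
      ∀ z : ℂ, d.eval z ≠ 0 → (P.map (evalRingHom z)).Separable := by
  classical
  set R := Polynomial ℂ
  set K := FractionRing R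
  have hinj : Function.Injective (algebraMap R K) := IsFractionRing.injective R K
  set PK := P.map (algebraMap R K) with hPK
  have hPKmonic : PK.Monic := hP.map _
  have hPKsf : Squarefree PK := by
    rw [Squarefree]
    by_contra hcon
    push_neg at hcon
    obtain ⟨g, hgdvd, hgu⟩ := hcon
    have hg0 : g ≠ 0 := by
      rintro rfl
      rw [mul_zero, zero_dvd_iff] at hgdvd
      exact hPKmonic.ne_zero hgdvd
    have hlc0 : g.leadingCoeff ≠ 0 := leadingCoeff_ne_zero.mpr hg0
    set gm := g * C (leadingCoeff g)⁻¹ with hgm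
    have hgmmonic : gm.Monic := monic_mul_leadingCoeff_inv hg0
    have hgdvd' : g ∣ PK := (dvd_mul_right g g).trans hgdvd
    have hgmg : gm ∣ g := by
      refine ⟨C g.leadingCoeff, ?_⟩
      rw [hgm, mul_assoc, ← C_mul, inv_mul_cancel₀ hlc0, C_1, mul_one]
    have hgmdvd : gm ∣ PK := hgmg.trans hgdvd'
    obtain ⟨q, hq⟩ := IsIntegrallyClosed.eq_map_mul_C_of_dvd K hP hgmdvd
    rw [hgmmonic.leadingCoeff, C_1, mul_one] at hq
    have hqmonic : q.Monic := by
      have hqm : (q.map (algebraMap R K)).Monic := by rw [hq]; exact hgmmonic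
      exact Polynomial.monic_of_injective (f := algebraMap R K) hinj hqm
    have hggm : g ∣ gm := ⟨C (g.leadingCoeff)⁻¹, rfl⟩
    have hq2 : q * q ∣ P := by
      refine hP.dvd_of_fraction_map_dvd_fraction_map (K := K) (hqmonic.mul hqmonic) ?_
      rw [Polynomial.map_mul, hq]
      exact (mul_dvd_mul hgmg hgmg).trans hgdvd
    have hqd : 0 < q.natDegree := by
      rcases Nat.eq_zero_or_pos q.natDegree with h0 | h
      · exfalso
        have hq1 : q = 1 := eq_one_of_monic_natDegree_zero hqmonic h0
        rw [hq1, Polynomial.map_one] at hq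
        apply hgu
        have hgm1 : g * C (leadingCoeff g)⁻¹ = 1 := hq.symm
        have hgC : g = C g.leadingCoeff := by
          calc g = g * C (leadingCoeff g)⁻¹ * C g.leadingCoeff := by
                rw [mul_assoc, ← C_mul, inv_mul_cancel₀ hlc0, C_1, mul_one]
          _ = 1 * C g.leadingCoeff := by rw [hgm1]
          _ = C g.leadingCoeff := one_mul _
        rw [hgC]
        exact isUnit_C.mpr (isUnit_iff_ne_zero.mpr hlc0)
      · exact h
    obtain ⟨r, hr⟩ := hq2
    have hspec := congrArg (Polynomial.map (evalRingHom z₀)) hr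
    rw [Polynomial.map_mul, Polynomial.map_mul] at hspec
    have hbad := hsq (q.map (evalRingHom z₀)) ⟨r.map (evalRingHom z₀), hspec⟩
    refine not_isUnit_of_natDegree_pos _ ?_ hbad
    rw [hqmonic.natDegree_map]
    exact hqd
  have hsep : PK.Separable := PerfectField.separable_iff_squarefree.mpr hPKsf
  obtain ⟨u, v, huv⟩ := hsep
  obtain ⟨bu, hbu⟩ := IsLocalization.integerNormalization_map_to_map (nonZeroDivisors R) u
  obtain ⟨bv, hbv⟩ := IsLocalization.integerNormalization_map_to_map (nonZeroDivisors R) v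
  set u0 := IsLocalization.integerNormalization (nonZeroDivisors R) u with hu0
  set v0 := IsLocalization.integerNormalization (nonZeroDivisors R) v with hv0
  refine ⟨(bu : R) * (bv : R), mul_ne_zero (nonZeroDivisors.coe_ne_zero bu)
    (nonZeroDivisors.coe_ne_zero bv), ?_⟩
  have hsmul : ∀ (b : R) (w : Polynomial K), b • w = C (algebraMap R K b) * w := by
    intro b w
    rw [← smul_eq_C_mul, algebraMap_smul]
  have hkey : (u0 * C (bv : R)) * P + (v0 * C (bu : R)) * derivative P
      = C ((bu : R) * (bv : R)) := by
    apply Polynomial.map_injective (algebraMap R K) hinj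
    rw [Polynomial.map_add, Polynomial.map_mul, Polynomial.map_mul, Polynomial.map_mul,
      Polynomial.map_mul, map_C, map_C, map_C, hbu, hbv, ← derivative_map,
      hsmul, hsmul, _root_.map_mul, C_mul]
    linear_combination (C (algebraMap R K (bu : R)) * C (algebraMap R K (bv : R))) * huv
  intro z hz
  have hz' : ((bu : R) * (bv : R)).eval z ≠ 0 := hz
  have hmapped := congrArg (Polynomial.map (evalRingHom z)) hkey
  rw [Polynomial.map_add, Polynomial.map_mul, Polynomial.map_mul, Polynomial.map_mul,
    Polynomial.map_mul, map_C, map_C, map_C, ← derivative_map] at hmapped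
  simp only [coe_evalRingHom] at hmapped
  rw [Polynomial.Separable]
  set e : ℂ := ((bu : R) * (bv : R)).eval z with he
  refine ⟨C e⁻¹ * (u0.map (evalRingHom z) * C ((bv : R).eval z)),
    C e⁻¹ * (v0.map (evalRingHom z) * C ((bu : R).eval z)), ?_⟩
  have hC : C e⁻¹ * C e = 1 := by
    rw [← C_mul, inv_mul_cancel₀ hz', C_1]
  calc C e⁻¹ * (u0.map (evalRingHom z) * C ((bv : R).eval z)) * (P.map (evalRingHom z))
        + C e⁻¹ * (v0.map (evalRingHom z) * C ((bu : R).eval z))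
          * derivative (P.map (evalRingHom z))
      = C e⁻¹ * ((u0.map (evalRingHom z) * C ((bv : R).eval z)) * (P.map (evalRingHom z))
        + (v0.map (evalRingHom z) * C ((bu : R).eval z))
          * derivative (P.map (evalRingHom z))) := by ring
    _ = C e⁻¹ * C e := by rw [hmapped, he]
    _ = 1 := hC

end

end DenseAux

/-- let `Ω ⊆ Mₙ(ℂ)` be convex and `Ω_s` the set of matrices in `Ω`
that are nonsingular and have `n` distinct eigenvalues.  If the closure of `Ω`
contains a nonsingular matrix with distinct eigenvalues, then `Ω_s` is dense in
`Ω`. -/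
theorem nonsingular_distinct_eigenvalues_dense_of_convex (n : ℕ)
    (Ω : Set (Matrix (Fin n) (Fin n) ℂ)) (hconv : Convex ℝ Ω)
    (h : ∃ A ∈ closure Ω, A.det ≠ 0 ∧ A.charpoly.roots.Nodup) :
    Ω ⊆ closure {A ∈ Ω | A.det ≠ 0 ∧ A.charpoly.roots.Nodup} := by
  classical
  obtain ⟨A, hAcl, hAgood⟩ := h
  obtain ⟨A', hA'goodset, hA'Ω⟩ :=
    _root_.mem_closure_iff.mp hAcl _ (DenseAux.isOpen_good n) hAgood
  obtain ⟨hA'det, hA'nodup⟩ := hA'goodset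
  intro B hB
  rw [_root_.mem_closure_iff]
  intro U hU hBU
  set N : Matrix (Fin n) (Fin n) (Polynomial ℂ) :=
    Matrix.of fun i j => Polynomial.C (B i j) + Polynomial.X * Polynomial.C (A' i j - B i j)
    with hN
  have hNmap : ∀ z : ℂ, N.map (evalRingHom z) = B + z • (A' - B) := by
    intro z
    ext i j
    simp [hN, Matrix.map_apply, Matrix.add_apply, Matrix.smul_apply, Matrix.sub_apply,
      smul_eq_mul]
  have hNmap1 : N.map (evalRingHom (1 : ℂ)) = A' := by
    rw [hNmap 1, one_smul, add_sub_cancel]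
  set P := N.charpoly with hPdef
  have hPmonic : P.Monic := N.charpoly_monic
  have hPz : ∀ z : ℂ, (N.map (evalRingHom z)).charpoly = P.map (evalRingHom z) := fun z =>
    Matrix.charpoly_map N (evalRingHom z)
  have hA'sq : Squarefree (P.map (evalRingHom (1 : ℂ))) := by
    rw [← hPz 1, hNmap1, ← PerfectField.separable_iff_squarefree]
    exact (nodup_roots_iff_of_splits (Matrix.charpoly_monic A').ne_zero
      (IsAlgClosed.splits _)).mp hA'nodup
  obtain ⟨d, hd0, hdsep⟩ := DenseAux.exists_denominator hPmonic 1 hA'sq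
  set dN := N.det with hdN
  have hdNeval : ∀ z : ℂ, dN.eval z = (N.map (evalRingHom z)).det := by
    intro z
    rw [hdN]
    rw [show dN.eval z = evalRingHom z N.det from rfl, RingHom.map_det,
      RingHom.mapMatrix_apply]
  have hdN0 : dN ≠ 0 := by
    intro h0
    apply hA'det
    rw [← hNmap1, ← hdNeval 1, h0, eval_zero]
  set Q := dN * d with hQ
  have hQ0 : Q ≠ 0 := mul_ne_zero hdN0 hd0
  set f : ℝ → Matrix (Fin n) (Fin n) ℂ := fun t => B + (t : ℂ) • (A' - B) with hf
  have hfc : Continuous f :=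
    continuous_const.add ((Complex.continuous_ofReal).smul continuous_const)
  have hf0 : f 0 = B := by simp [hf]
  have hVopen : IsOpen (f ⁻¹' U) := hU.preimage hfc
  have h0V : (0 : ℝ) ∈ f ⁻¹' U := by rw [Set.mem_preimage, hf0]; exact hBU
  obtain ⟨ε, hε, hball⟩ := Metric.isOpen_iff.mp hVopen 0 h0V
  have hZfin : Set.Finite {t : ℝ | Q.eval ((t : ℝ) : ℂ) = 0} := by
    refine Set.Finite.preimage (Function.Injective.injOn Complex.ofReal_injective)
      (Polynomial.finite_setOf_isRoot hQ0)
  have hIoo : Set.Infinite (Set.Ioo (0 : ℝ) (min ε 1)) :=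
    Set.Ioo_infinite (lt_min hε one_pos)
  obtain ⟨t, ⟨⟨ht0, htm⟩, htZ⟩⟩ := (hIoo.diff hZfin).nonempty
  have htε : t < ε := lt_of_lt_of_le htm (min_le_left _ _)
  have ht1 : t ≤ 1 := (lt_of_lt_of_le htm (min_le_right _ _)).le
  have htZ' : Q.eval ((t : ℝ) : ℂ) ≠ 0 := htZ
  have hdt : d.eval ((t : ℝ) : ℂ) ≠ 0 := fun hc => htZ' (by rw [hQ, eval_mul, hc, mul_zero])
  have hdNt : dN.eval ((t : ℝ) : ℂ) ≠ 0 := fun hc => htZ' (by rw [hQ, eval_mul, hc, zero_mul])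
  have hfΩ : f t ∈ Ω := by
    have hmem := hconv hB hA'Ω (by linarith : (0:ℝ) ≤ 1 - t) (le_of_lt ht0) (by ring)
    convert hmem using 1
    ext i j
    simp [hf, Matrix.add_apply, Matrix.smul_apply, Matrix.sub_apply, Complex.real_smul,
      smul_eq_mul]
    ring
  have hft : f t = N.map (evalRingHom ((t : ℝ) : ℂ)) := (hNmap _).symm
  have hfU : f t ∈ U := by
    apply hball
    rw [Metric.mem_ball, Real.dist_eq, sub_zero, abs_of_pos ht0]
    exact htε
  refine ⟨f t, hfU, hfΩ, ?_, ?_⟩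
  · rw [hft, ← hdNeval]
    exact hdNt
  · rw [hft, hPz]
    exact nodup_roots (hdsep _ hdt)
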